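/- If 1 ≤ r < 2 and τ > 0, then the limit C_τ = lim_{e→0⁺} [∫₀^τ 2/(t^r + e) dt − f(e)] exists and is finite, where f(e) = (2π)/(r sin(π/r)) e^{-(r-1)/r} for r > 1 and f(e) = 2 log(1 + 1/e) for r = 1. -/

import Mathlib

open Real MeasureTheory Set Filter

lemma beta_interval {a : ℝ} (h0 : 0 < a) (h1 : a < 1) :
    ∫ x in (0:ℝ)..1, x ^ (a - 1) * (1 - x) ^ (-a) = π / Real.sin (π * a) := by
  have key : ((∫ x in (0:ℝ)..1, x ^ (a - 1) * (1 - x) ^ (-a) : ℝ) : ℂ)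
      = Complex.betaIntegral a (1 - a) := by
    rw [← intervalIntegral.integral_ofReal]
    unfold Complex.betaIntegral
    refine intervalIntegral.integral_congr fun x hx => ?_
    rw [uIcc_of_le (by norm_num : (0:ℝ) ≤ 1)] at hx
    rw [Complex.ofReal_mul, Complex.ofReal_cpow hx.1,
      Complex.ofReal_cpow (by linarith [hx.2] : (0:ℝ) ≤ 1 - x)]
    push_cast
    norm_num
  have hG : Complex.betaIntegral a (1 - a) = (π : ℂ) / Complex.sin (π * a) := by
    have hb := Complex.Gamma_mul_Gamma_eq_betaIntegral (s := (a:ℂ)) (t := 1 - a)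
      (by simpa using h0) (by simp [Complex.sub_re]; linarith)
    rw [show (a:ℂ) + (1 - a) = 1 by ring, Complex.Gamma_one, one_mul,
      Complex.Gamma_mul_Gamma_one_sub] at hb
    exact hb.symm
  have := key.trans hG
  rw [← Complex.ofReal_mul, ← Complex.ofReal_sin] at this
  exact_mod_cast this


lemma beta_Ioi {a : ℝ} (h0 : 0 < a) (h1 : a < 1) :
    ∫ u in Ioi (0:ℝ), u ^ (a - 1) / (1 + u) = π / Real.sin (π * a) := by
  have himg : (fun s : ℝ => s / (1 - s)) '' Ioo (0:ℝ) 1 = Ioi 0 := by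
    ext u
    constructor
    · rintro ⟨s, ⟨hs0, hs1⟩, rfl⟩
      exact div_pos hs0 (by linarith)
    · intro hu
      have hu0 : (0:ℝ) < u := hu
      have h1u : (0:ℝ) < 1 + u := by linarith
      refine ⟨u / (1 + u), ⟨div_pos hu0 h1u, by rw [div_lt_one h1u]; linarith⟩, ?_⟩
      field_simp
      ring
  have hderiv : ∀ s ∈ Ioo (0:ℝ) 1,
      HasDerivWithinAt (fun s : ℝ => s / (1 - s)) (((1 - s) ^ 2)⁻¹) (Ioo 0 1) s := by
    intro s hs
    have h1s : (0:ℝ) < 1 - s := by linarith [hs.2]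
    have h := (hasDerivAt_id s).div ((hasDerivAt_id s).const_sub 1) h1s.ne'
    have heq : (1 * (1 - s) - s * -1) / (1 - s) ^ 2 = ((1 - s) ^ 2)⁻¹ := by
      field_simp
      ring
    simp only [id_eq] at h
    rw [heq] at h
    exact h.hasDerivWithinAt
  have hinj : InjOn (fun s : ℝ => s / (1 - s)) (Ioo (0:ℝ) 1) := by
    intro x hx y hy h
    have hx1 : (0:ℝ) < 1 - x := by linarith [hx.2]
    have hy1 : (0:ℝ) < 1 - y := by linarith [hy.2]
    simp only at h
    field_simp at h
    nlinarith [h]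
  have := integral_image_eq_integral_abs_deriv_smul measurableSet_Ioo hderiv hinj
    (fun u : ℝ => u ^ (a - 1) / (1 + u))
  rw [← himg, this]
  have hcong : EqOn
      (fun s : ℝ => |((1 - s) ^ 2)⁻¹| • ((s / (1 - s)) ^ (a - 1) / (1 + s / (1 - s))))
      (fun s : ℝ => s ^ (a - 1) * (1 - s) ^ (-a)) (Ioo 0 1) := by
    intro s hs
    have hs0 : (0:ℝ) < s := hs.1
    have h1s : (0:ℝ) < 1 - s := by linarith [hs.2]
    have hX : (0:ℝ) < (1 - s) ^ a := Real.rpow_pos_of_pos h1s a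
    simp only [smul_eq_mul]
    rw [abs_of_pos (by positivity), Real.div_rpow hs0.le h1s.le,
      show (1:ℝ) + s / (1 - s) = (1 - s)⁻¹ by field_simp; ring,
      Real.rpow_sub h1s a 1, Real.rpow_one, Real.rpow_neg h1s.le a,
      Real.rpow_sub hs0 a 1, Real.rpow_one]
    have hXs : (0:ℝ) < s ^ a := Real.rpow_pos_of_pos hs0 a
    field_simp
  rw [setIntegral_congr_fun measurableSet_Ioo hcong, ← integral_Ioc_eq_integral_Ioo,
    ← intervalIntegral.integral_of_le (by norm_num : (0:ℝ) ≤ 1), beta_interval h0 h1]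


lemma int_inv_one_add_rpow {r : ℝ} (hr1 : 1 < r) :
    ∫ t in Ioi (0:ℝ), (1 + t ^ r)⁻¹ = π / (r * Real.sin (π / r)) := by
  have hr0 : (0:ℝ) < r := by linarith
  have ha0 : (0:ℝ) < 1 / r := by positivity
  have ha1 : 1 / r < 1 := by rw [div_lt_one hr0]; linarith
  have hsub := MeasureTheory.integral_comp_rpow_Ioi_of_pos
    (g := fun u : ℝ => u ^ (1 / r - 1) / (1 + u)) hr0
  have h2 : (∫ x in Ioi (0:ℝ), (r * x ^ (r - 1)) • ((x ^ r) ^ (1 / r - 1) / (1 + x ^ r)))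
      = r * ∫ t in Ioi (0:ℝ), (1 + t ^ r)⁻¹ := by
    rw [← integral_const_mul]
    refine setIntegral_congr_fun measurableSet_Ioi fun x hx => ?_
    have hx0 : (0:ℝ) < x := hx
    have hxr : (0:ℝ) < x ^ r := Real.rpow_pos_of_pos hx0 r
    have hxx : x ^ (r - 1) * x ^ (1 - r) = 1 := by
      rw [← Real.rpow_add hx0, show r - 1 + (1 - r) = 0 by ring, Real.rpow_zero]
    simp only [smul_eq_mul]
    rw [← Real.rpow_mul hx0.le, show r * (1 / r - 1) = 1 - r by field_simp]
    field_simp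
    linear_combination hxx
  rw [h2, beta_Ioi ha0 ha1, show π * (1 / r) = π / r by ring] at hsub
  have : π / (r * Real.sin (π / r)) = (π / Real.sin (π / r)) / r := by
    rw [div_div, mul_comm]
  rw [this, ← hsub, mul_comm, mul_div_assoc, div_self hr0.ne', mul_one]



lemma contOn {r e : ℝ} (hr0 : 0 < r) (he : 0 ≤ e) :
    ContinuousOn (fun t : ℝ => (t ^ r + e)⁻¹) (Ioi 0) := by
  have hc : Continuous fun t : ℝ => t ^ r + e :=
    (continuous_iff_continuousAt.mpr fun x =>
      Real.continuousAt_rpow_const x r (Or.inr hr0.le)).add continuous_const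
  refine hc.continuousOn.inv₀ fun t ht => ?_
  have ht0 : (0:ℝ) < t := ht
  positivity

lemma scaling {r : ℝ} (hr0 : 0 < r) {e : ℝ} (he : 0 < e) :
    ∫ t in Ioi (0:ℝ), (t ^ r + e)⁻¹ = e ^ (1 / r - 1) * ∫ t in Ioi (0:ℝ), (1 + t ^ r)⁻¹ := by
  set c : ℝ := e ^ (1 / r) with hc_def
  have hc : (0:ℝ) < c := Real.rpow_pos_of_pos he _
  have hcr : c ^ r = e := by
    rw [hc_def, ← Real.rpow_mul he.le]
    rw [show 1 / r * r = 1 by field_simp, Real.rpow_one]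
  have key := MeasureTheory.integral_comp_mul_left_Ioi
    (g := fun t : ℝ => (t ^ r + e)⁻¹) 0 hc
  rw [mul_zero] at key
  have hcong : (∫ x in Ioi (0:ℝ), ((c * x) ^ r + e)⁻¹)
      = ∫ x in Ioi (0:ℝ), e⁻¹ * (1 + x ^ r)⁻¹ := by
    refine setIntegral_congr_fun measurableSet_Ioi fun x hx => ?_
    have hx0 : (0:ℝ) < x := hx
    rw [Real.mul_rpow hc.le hx0.le, hcr,
      show e * x ^ r + e = e * (1 + x ^ r) by ring, mul_inv]
  rw [hcong, integral_const_mul, smul_eq_mul] at key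
  have hmain : (∫ t in Ioi (0:ℝ), (t ^ r + e)⁻¹)
      = c * (e⁻¹ * ∫ x in Ioi (0:ℝ), (1 + x ^ r)⁻¹) := by
    rw [key, ← mul_assoc, mul_inv_cancel₀ hc.ne', one_mul]
  rw [hmain, hc_def]
  rw [show e ^ (1 / r - 1) = e ^ (1 / r) * e⁻¹ by
    rw [Real.rpow_sub he, Real.rpow_one]; ring]
  ring

lemma int_Ioc_head {r e τ : ℝ} (hr0 : 0 < r) (he : 0 < e) :
    IntegrableOn (fun t : ℝ => (t ^ r + e)⁻¹) (Ioc 0 τ) := by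
  have hmeas : AEStronglyMeasurable (fun t : ℝ => (t ^ r + e)⁻¹)
      (volume.restrict (Ioc 0 τ)) :=
    ((contOn hr0 he.le).mono Ioc_subset_Ioi_self).aestronglyMeasurable measurableSet_Ioc
  refine Integrable.mono' (g := fun _ => e⁻¹)
    (integrableOn_const measure_Ioc_lt_top.ne) hmeas ?_
  rw [ae_restrict_iff' measurableSet_Ioc]
  refine ae_of_all _ fun t ht => ?_
  have ht0 : (0:ℝ) < t := ht.1
  have h1 : (0:ℝ) ≤ t ^ r := Real.rpow_nonneg ht0.le r
  rw [Real.norm_eq_abs, abs_of_pos (by positivity)]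
  exact inv_anti₀ he (by linarith)

lemma int_Ioi_tail {r e τ : ℝ} (hr1 : 1 < r) (he : 0 ≤ e) (hτ : 0 < τ) :
    IntegrableOn (fun t : ℝ => (t ^ r + e)⁻¹) (Ioi τ) := by
  have hb : IntegrableOn (fun t : ℝ => t ^ (-r)) (Ioi τ) :=
    integrableOn_Ioi_rpow_of_lt (by linarith) hτ
  have hmeas : AEStronglyMeasurable (fun t : ℝ => (t ^ r + e)⁻¹)
      (volume.restrict (Ioi τ)) :=
    ((contOn (by linarith) he).mono (Ioi_subset_Ioi hτ.le)).aestronglyMeasurable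
      measurableSet_Ioi
  refine hb.mono' hmeas ?_
  rw [ae_restrict_iff' measurableSet_Ioi]
  refine ae_of_all _ fun t ht => ?_
  have ht0 : (0:ℝ) < t := hτ.trans ht
  have h1 : (0:ℝ) < t ^ r := Real.rpow_pos_of_pos ht0 r
  rw [Real.norm_eq_abs, abs_of_pos (by positivity), Real.rpow_neg ht0.le]
  gcongr
  linarith

lemma tail_tendsto {r τ : ℝ} (hr1 : 1 < r) (hτ : 0 < τ) :
    Tendsto (fun e : ℝ => ∫ t in Ioi τ, (t ^ r + e)⁻¹) (nhdsWithin 0 (Ioi 0))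
      (nhds (∫ t in Ioi τ, (t ^ r + 0)⁻¹)) := by
  have hr0 : (0:ℝ) < r := by linarith
  apply MeasureTheory.tendsto_integral_filter_of_dominated_convergence
    (fun t : ℝ => t ^ (-r))
  · filter_upwards [self_mem_nhdsWithin] with e he
    exact ((contOn hr0 (le_of_lt he)).mono (Ioi_subset_Ioi hτ.le)).aestronglyMeasurable
      measurableSet_Ioi
  · filter_upwards [self_mem_nhdsWithin] with e he
    rw [ae_restrict_iff' measurableSet_Ioi]
    refine ae_of_all _ fun t ht => ?_
    have ht0 : (0:ℝ) < t := hτ.trans ht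
    have h1 : (0:ℝ) < t ^ r := Real.rpow_pos_of_pos ht0 r
    have he0 : (0:ℝ) < e := he
    rw [Real.norm_eq_abs, abs_of_pos (by positivity), Real.rpow_neg ht0.le]
    gcongr
    linarith
  · exact integrableOn_Ioi_rpow_of_lt (by linarith) hτ
  · rw [ae_restrict_iff' measurableSet_Ioi]
    refine ae_of_all _ fun t ht => ?_
    have ht0 : (0:ℝ) < t := hτ.trans ht
    have h1 : (0:ℝ) < t ^ r := Real.rpow_pos_of_pos ht0 r
    have : Tendsto (fun e : ℝ => t ^ r + e) (nhds 0) (nhds (t ^ r + 0)) :=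
      tendsto_const_nhds.add tendsto_id
    exact (this.inv₀ (by positivity)).mono_left nhdsWithin_le_nhds


/-- For `1 ≤ r < 2` and `τ > 0`, the limit
`C_τ = lim_{e→0⁺} [∫₀^τ 2/(t^r+e) dt − f(e)]` exists and is finite, where
`f(e) = (2π)/(r sin(π/r)) e^{-(r-1)/r}` for `r > 1` and `f(e) = 2 log(1+1/e)` for `r = 1`. -/
theorem stmt_3 (r τ : ℝ) (hr1 : 1 ≤ r) (hr2 : r < 2) (hτ : 0 < τ) :
    ∃ Cτ : ℝ, Tendsto
      (fun e : ℝ => (∫ t in Ioc (0:ℝ) τ, 2 / (t ^ r + e)) -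
        (if r = 1 then 2 * Real.log (1 + 1 / e)
         else (2 * π) / (r * Real.sin (π / r)) * e ^ (-(r - 1) / r)))
      (nhdsWithin 0 (Ioi 0)) (nhds Cτ) := by
  rcases eq_or_lt_of_le hr1 with h1 | h1
  · -- r = 1
    have hr : r = 1 := h1.symm
    subst hr
    refine ⟨2 * Real.log τ, ?_⟩
    have heq : ∀ᶠ e in nhdsWithin (0:ℝ) (Ioi 0),
        2 * Real.log (τ + e) - 2 * Real.log (1 + e)
          = (∫ t in Ioc (0:ℝ) τ, 2 / (t ^ (1:ℝ) + e)) -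
            (if (1:ℝ) = 1 then 2 * Real.log (1 + 1 / e)
             else (2 * π) / (1 * Real.sin (π / 1)) * e ^ (-((1:ℝ) - 1) / 1)) := by
      filter_upwards [self_mem_nhdsWithin] with e he
      have he0 : (0:ℝ) < e := he
      rw [if_pos rfl]
      have hint : (∫ t in Ioc (0:ℝ) τ, 2 / (t ^ (1:ℝ) + e))
          = 2 * (Real.log (τ + e) - Real.log e) := by
        rw [← intervalIntegral.integral_of_le hτ.le]
        simp only [Real.rpow_one, div_eq_mul_inv]
        rw [intervalIntegral.integral_const_mul,
          intervalIntegral.integral_comp_add_right (fun x => x⁻¹) e, zero_add,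
          integral_inv_of_pos he0 (by linarith),
          Real.log_div (by linarith) he0.ne']
      have hlog : Real.log (1 + 1 / e) = Real.log (1 + e) - Real.log e := by
        rw [show (1:ℝ) + 1 / e = (1 + e) / e by field_simp; ring,
          Real.log_div (by positivity) he0.ne']
      rw [hint, hlog]
      ring
    refine Tendsto.congr' heq ?_
    have l1 : Tendsto (fun e : ℝ => 2 * Real.log (τ + e)) (nhdsWithin 0 (Ioi 0))
        (nhds (2 * Real.log τ)) := by
      have h : Tendsto (fun e : ℝ => τ + e) (nhds 0) (nhds τ) := by
        simpa using (tendsto_const_nhds (x := τ)).add (tendsto_id (x := nhds (0:ℝ)))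
      exact (((Real.continuousAt_log hτ.ne').tendsto.comp h).const_mul 2).mono_left
        nhdsWithin_le_nhds
    have l2 : Tendsto (fun e : ℝ => 2 * Real.log (1 + e)) (nhdsWithin 0 (Ioi 0))
        (nhds (2 * Real.log 1)) := by
      have h : Tendsto (fun e : ℝ => 1 + e) (nhds 0) (nhds 1) := by
        simpa using (tendsto_const_nhds (x := (1:ℝ))).add (tendsto_id (x := nhds (0:ℝ)))
      exact (((Real.continuousAt_log one_ne_zero).tendsto.comp h).const_mul 2).mono_left
        nhdsWithin_le_nhds
    have := l1.sub l2
    simpa [Real.log_one] using this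
  · -- r > 1
    have hr0 : (0:ℝ) < r := by linarith
    have hne : r ≠ 1 := h1.ne'
    refine ⟨-2 * ∫ t in Ioi τ, (t ^ r + 0)⁻¹, ?_⟩
    have heq : ∀ᶠ e in nhdsWithin (0:ℝ) (Ioi 0),
        -2 * (∫ t in Ioi τ, (t ^ r + e)⁻¹)
          = (∫ t in Ioc (0:ℝ) τ, 2 / (t ^ r + e)) -
            (if r = 1 then 2 * Real.log (1 + 1 / e)
             else (2 * π) / (r * Real.sin (π / r)) * e ^ (-(r - 1) / r)) := by
      filter_upwards [self_mem_nhdsWithin] with e he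
      have he0 : (0:ℝ) < e := he
      rw [if_neg hne]
      have hsplit : (∫ t in Ioi (0:ℝ), (t ^ r + e)⁻¹)
          = (∫ t in Ioc (0:ℝ) τ, (t ^ r + e)⁻¹) + ∫ t in Ioi τ, (t ^ r + e)⁻¹ := by
        rw [← setIntegral_union Ioc_disjoint_Ioi_same measurableSet_Ioi
          (int_Ioc_head hr0 he0) (int_Ioi_tail h1 he0.le hτ), Ioc_union_Ioi_eq_Ioi hτ.le]
      have h2 : (∫ t in Ioc (0:ℝ) τ, 2 / (t ^ r + e))
          = 2 * ∫ t in Ioc (0:ℝ) τ, (t ^ r + e)⁻¹ := by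
        simp only [div_eq_mul_inv]
        rw [integral_const_mul]
      have hval : (∫ t in Ioi (0:ℝ), (t ^ r + e)⁻¹)
          = e ^ (1 / r - 1) * (π / (r * Real.sin (π / r))) := by
        rw [scaling hr0 he0, int_inv_one_add_rpow h1]
      have hexp : -(r - 1) / r = 1 / r - 1 := by field_simp; ring
      have hIoc : (∫ t in Ioc (0:ℝ) τ, (t ^ r + e)⁻¹)
          = e ^ (1 / r - 1) * (π / (r * Real.sin (π / r))) - ∫ t in Ioi τ, (t ^ r + e)⁻¹ := by
        rw [← hval, hsplit]; ring
      rw [h2, hexp, hIoc]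
      ring
    exact Tendsto.congr' heq ((tail_tendsto h1 hτ).const_mul (-2))
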